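/- For fixed ε₀ > 0, τ > 0, P̄ > 0, M ≥ 1, as P₀ → ∞ the quantity P₀ · 𝔓(P₀), where 𝔓(P₀) = (1 − e^{−Mτ})(1 − e^{−ε₀/P₀}) − e^{−Mτ}(e^{−ε₀/P₀} − e^{−ε₀(1+P̄τ)/P₀}) + e^{M/P̄}(e^{−(1+M P₀/(P̄ε₀))ε₀/P₀} − e^{−(1+MP₀/(P̄ε₀))ε₀(1+P̄τ)/P₀})/(1+MP₀/(P̄ε₀)) + e^{−Mτ}(1 − e^{−ε₀/P₀}), converges to ε₀ + ε₀P̄((1 − e^{−Mτ})/M − τe^{−Mτ}). -/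

import Mathlib

open Real Filter

lemma aux_exp_lim (c : ℝ) (hc : c ≠ 0) :
    Tendsto (fun P : ℝ => P * (1 - exp (-c / P))) atTop (nhds c) := by
  have hd : HasDerivAt Real.exp 1 0 := by simpa using Real.hasDerivAt_exp 0
  have hs : Tendsto (fun t : ℝ => (Real.exp t - 1) / t) (nhdsWithin 0 {(0:ℝ)}ᶜ) (nhds 1) := by
    have := hasDerivAt_iff_tendsto_slope.mp hd
    refine this.congr fun t => ?_
    simp [slope_def_field]
  have hcomp : Tendsto (fun P : ℝ => -c / P) atTop (nhdsWithin 0 {(0:ℝ)}ᶜ) := by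
    apply tendsto_nhdsWithin_of_tendsto_nhds_of_eventually_within
    · have : Tendsto (fun P : ℝ => -c * P⁻¹) atTop (nhds 0) := by
        simpa using tendsto_inv_atTop_zero.const_mul (-c)
      simpa [div_eq_mul_inv] using this
    · filter_upwards [eventually_gt_atTop (0:ℝ)] with P hP
      exact div_ne_zero (neg_ne_zero.mpr hc) hP.ne'
  have h1 : Tendsto (fun P : ℝ => c * ((exp (-c / P) - 1) / (-c / P))) atTop (nhds (c * 1)) :=
    (hs.comp hcomp).const_mul c
  rw [mul_one] at h1
  refine h1.congr' ?_
  filter_upwards [eventually_gt_atTop (0:ℝ)] with P hP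
  have h2 : -c / P ≠ 0 := div_ne_zero (neg_ne_zero.mpr hc) hP.ne'
  rw [mul_comm, div_mul_eq_mul_div, div_eq_iff h2]
  field_simp
  ring

theorem type1_dcc_outage_asymptotics
    (ε₀ τ Pb : ℝ) (hε : 0 < ε₀) (hτ : 0 < τ) (hPb : 0 < Pb) (M : ℕ) (hM : 1 ≤ M) :
    Tendsto (fun P₀ : ℝ =>
        P₀ * ((1 - exp (-(M : ℝ) * τ)) * (1 - exp (-ε₀ / P₀))
          - exp (-(M : ℝ) * τ) * (exp (-ε₀ / P₀) - exp (-ε₀ * (1 + Pb * τ) / P₀))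
          + exp ((M : ℝ) / Pb) *
              (exp (-(1 + (M : ℝ) * P₀ / (Pb * ε₀)) * ε₀ / P₀)
                - exp (-(1 + (M : ℝ) * P₀ / (Pb * ε₀)) * (ε₀ * (1 + Pb * τ)) / P₀)) /
            (1 + (M : ℝ) * P₀ / (Pb * ε₀))
          + exp (-(M : ℝ) * τ) * (1 - exp (-ε₀ / P₀))))
      atTop
      (nhds (ε₀ + ε₀ * Pb * ((1 - exp (-(M : ℝ) * τ)) / (M : ℝ) - τ * exp (-(M : ℝ) * τ)))) := by
  have hMR : (0:ℝ) < (M:ℝ) := by exact_mod_cast Nat.lt_of_lt_of_le Nat.zero_lt_one hM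
  set E := exp (-(M : ℝ) * τ) with hE
  set c₂ := ε₀ * (1 + Pb * τ) with hc₂def
  have hc₂ : 0 < c₂ := by positivity
  have hg₁ := aux_exp_lim ε₀ hε.ne'
  have hg₂ := aux_exp_lim c₂ hc₂.ne'
  have hh : Tendsto (fun P : ℝ => (P⁻¹ + (M:ℝ)/(Pb*ε₀))⁻¹) atTop (nhds (Pb*ε₀/(M:ℝ))) := by
    have h0 : Tendsto (fun P : ℝ => P⁻¹ + (M:ℝ)/(Pb*ε₀)) atTop (nhds (0 + (M:ℝ)/(Pb*ε₀))) :=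
      tendsto_inv_atTop_zero.add tendsto_const_nhds
    rw [zero_add] at h0
    have h1 := h0.inv₀ (by positivity)
    rwa [inv_div] at h1
  have he₁ : Tendsto (fun P : ℝ => exp (-ε₀ / P)) atTop (nhds 1) := by
    have h0 : Tendsto (fun P : ℝ => -ε₀ / P) atTop (nhds 0) := by
      simpa [div_eq_mul_inv] using tendsto_inv_atTop_zero.const_mul (-ε₀)
    simpa [Function.comp_def] using (Real.continuous_exp.tendsto 0).comp h0
  have he₂ : Tendsto (fun P : ℝ => exp (-c₂ / P)) atTop (nhds 1) := by
    have h0 : Tendsto (fun P : ℝ => -c₂ / P) atTop (nhds 0) := by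
      simpa [div_eq_mul_inv] using tendsto_inv_atTop_zero.const_mul (-c₂)
    simpa [Function.comp_def] using (Real.continuous_exp.tendsto 0).comp h0
  have hG : Tendsto (fun P : ℝ =>
      (1 - E) * (P * (1 - exp (-ε₀/P)))
      - E * (P * (1 - exp (-c₂/P)) - P * (1 - exp (-ε₀/P)))
      + (exp (-ε₀/P) - E * exp (-c₂/P)) * (P⁻¹ + (M:ℝ)/(Pb*ε₀))⁻¹
      + E * (P * (1 - exp (-ε₀/P)))) atTop
      (nhds ((1-E)*ε₀ - E*(c₂ - ε₀) + (1 - E*1)*(Pb*ε₀/(M:ℝ)) + E*ε₀)) :=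
    (((hg₁.const_mul (1-E)).sub ((hg₂.sub hg₁).const_mul E)).add
      ((he₁.sub (he₂.const_mul E)).mul hh)).add (hg₁.const_mul E)
  have hval : (1-E)*ε₀ - E*(c₂ - ε₀) + (1 - E*1)*(Pb*ε₀/(M:ℝ)) + E*ε₀
      = ε₀ + ε₀ * Pb * ((1 - E)/(M:ℝ) - τ * E) := by
    rw [hc₂def]; field_simp; ring
  rw [hval] at hG
  refine hG.congr' ?_
  filter_upwards [eventually_gt_atTop (0:ℝ)] with P hP
  have hP' : P ≠ 0 := hP.ne'
  have hb : Pb * ε₀ ≠ 0 := by positivity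
  have hX₁ : -(1 + (M:ℝ) * P / (Pb * ε₀)) * ε₀ / P = -ε₀/P + -((M:ℝ)/Pb) := by
    field_simp; ring
  have hX₂ : -(1 + (M:ℝ) * P / (Pb * ε₀)) * (ε₀ * (1 + Pb * τ)) / P
      = -c₂/P + (-(M:ℝ)*τ + -((M:ℝ)/Pb)) := by
    rw [hc₂def]; field_simp; ring
  have hD : (0:ℝ) < 1 + (M:ℝ) * P / (Pb * ε₀) := by positivity
  have hDh : (P⁻¹ + (M:ℝ)/(Pb*ε₀))⁻¹ = P / (1 + (M:ℝ) * P / (Pb * ε₀)) := by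
    have h3 : P⁻¹ + (M:ℝ)/(Pb*ε₀) = (1 + (M:ℝ) * P / (Pb * ε₀)) / P := by
      field_simp
    rw [h3, inv_div]
  have hcc : -ε₀ * (1 + Pb * τ) / P = -c₂ / P := by rw [hc₂def]; ring
  rw [hX₁, hX₂, hcc, exp_add, exp_add, exp_add, hDh, Real.exp_neg ((M:ℝ)/Pb)]
  rw [← hE]
  field_simp
  ring
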